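/- Time-dependent GKSL sufficiency (finite dimensions): let −∞ ≤ α < ω ≤ ∞ and let ℒ : (α,ω) → End(M_n(ℂ)) be a continuous family of linear endomorphisms such that for each t there exist a completely positive linear map Ψ_t from M_n(ℂ) to itself and Hermitian matrices G_t, H_t with ℒ(t)(ρ) = Ψ_t(ρ) − (G_tρ + ρG_t) − i(H_tρ − ρH_t) for all ρ. Suppose Λ(t,s), defined for α < s ≤ t < ω, satisfies Λ(s,s) = id and ∂Λ(t,s)/∂t = ℒ(t) ∘ Λ(t,s) (derivative in the finite-dimensional space End(M_n(ℂ))). Then Λ(t,s) is completely positive for all s ≤ t. -/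

import Mathlib

open scoped Kronecker ComplexOrder Matrix

/-- The Choi matrix of a linear map `Λ : M_n(ℂ) → M_m(ℂ)`:
`C(Λ) = ∑ i j, Λ(E i j) ⊗ₖ E i j`, a matrix indexed by `Fin m × Fin n`. -/
noncomputable def choi {n m : ℕ}
    (Λ : Matrix (Fin n) (Fin n) ℂ →ₗ[ℂ] Matrix (Fin m) (Fin m) ℂ) :
    Matrix (Fin m × Fin n) (Fin m × Fin n) ℂ :=
  ∑ i : Fin n, ∑ j : Fin n,
    (Λ (Matrix.single i j 1)) ⊗ₖ (Matrix.single i j 1)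

/-- `Λ ⊗ id_N` : the unique linear map with `(Λ ⊗ id_N)(A ⊗ₖ B) = Λ(A) ⊗ₖ B`,
written out explicitly. -/
noncomputable def tensorId {n m : ℕ}
    (Λ : Matrix (Fin n) (Fin n) ℂ →ₗ[ℂ] Matrix (Fin m) (Fin m) ℂ) (N : ℕ)
    (M : Matrix (Fin n × Fin N) (Fin n × Fin N) ℂ) :
    Matrix (Fin m × Fin N) (Fin m × Fin N) ℂ :=
  Matrix.of fun p q => Λ (Matrix.of fun i j => M (i, p.2) (j, q.2)) p.1 q.1

/-- `Λ` is `N`-positive: `Λ ⊗ id_N` maps PSD matrices to PSD matrices. -/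
def NPos {n m : ℕ}
    (Λ : Matrix (Fin n) (Fin n) ℂ →ₗ[ℂ] Matrix (Fin m) (Fin m) ℂ) (N : ℕ) : Prop :=
  ∀ M : Matrix (Fin n × Fin N) (Fin n × Fin N) ℂ,
    M.PosSemidef → (tensorId Λ N M).PosSemidef

/-- `Λ` is completely positive: `N`-positive for every `N ≥ 1`. -/
def CP {n m : ℕ}
    (Λ : Matrix (Fin n) (Fin n) ℂ →ₗ[ℂ] Matrix (Fin m) (Fin m) ℂ) : Prop :=
  ∀ N : ℕ, 1 ≤ N → NPos Λ N

attribute [local instance] Matrix.normedAddCommGroup Matrix.normedSpace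

instance matrixCLM_continuousSMul_real {n : ℕ} :
    ContinuousSMul ℝ (Matrix (Fin n) (Fin n) ℂ →L[ℂ] Matrix (Fin n) (Fin n) ℂ) :=
  @IsBoundedSMul.continuousSMul ℝ (Matrix (Fin n) (Fin n) ℂ →L[ℂ] Matrix (Fin n) (Fin n) ℂ) _
    ContinuousLinearMap.toSeminormedAddCommGroup.toPseudoMetricSpace _ _ _
    (@NormedSpace.toIsBoundedSMul _ _ _ ContinuousLinearMap.toSeminormedAddCommGroup
      ContinuousLinearMap.toNormedSpace)

namespace GKSL19
open Matrix

variable {n m k : ℕ}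

noncomputable def matCLMSNG (n m : ℕ) :
    SeminormedAddCommGroup (Matrix (Fin n) (Fin n) ℂ →L[ℂ] Matrix (Fin m) (Fin m) ℂ) :=
  ContinuousLinearMap.toSeminormedAddCommGroup

attribute [local instance] matCLMSNG

lemma tensorId_comp (Φ : Matrix (Fin m) (Fin m) ℂ →ₗ[ℂ] Matrix (Fin k) (Fin k) ℂ)
    (Λ : Matrix (Fin n) (Fin n) ℂ →ₗ[ℂ] Matrix (Fin m) (Fin m) ℂ) (N : ℕ)
    (M : Matrix (Fin n × Fin N) (Fin n × Fin N) ℂ) :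
    tensorId (Φ ∘ₗ Λ) N M = tensorId Φ N (tensorId Λ N M) := rfl

lemma tensorId_id (N : ℕ) (M : Matrix (Fin n × Fin N) (Fin n × Fin N) ℂ) :
    tensorId (LinearMap.id) N M = M := by
  ext ⟨p1, p2⟩ ⟨q1, q2⟩
  simp [tensorId]

lemma tensorId_congr {L L' : Matrix (Fin n) (Fin n) ℂ →ₗ[ℂ] Matrix (Fin m) (Fin m) ℂ}
    (h : ∀ ρ, L ρ = L' ρ) (N : ℕ) (M : Matrix (Fin n × Fin N) (Fin n × Fin N) ℂ) :
    tensorId L N M = tensorId L' N M := by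
  ext ⟨p1, p2⟩ ⟨q1, q2⟩
  simp [tensorId, h]

lemma tensorId_sub_M (L : Matrix (Fin n) (Fin n) ℂ →ₗ[ℂ] Matrix (Fin m) (Fin m) ℂ) (N : ℕ)
    (M M' : Matrix (Fin n × Fin N) (Fin n × Fin N) ℂ) :
    tensorId L N (M - M') = tensorId L N M - tensorId L N M' := by
  ext ⟨p1, p2⟩ ⟨q1, q2⟩
  simp only [tensorId, of_apply, Matrix.sub_apply]
  rw [show (Matrix.of fun i j => M (i,p2) (j,q2) - M' (i,p2) (j,q2))
      = (Matrix.of fun i j => M (i, p2) (j, q2)) - (Matrix.of fun i j => M' (i, p2) (j, q2))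
      from rfl, map_sub, Matrix.sub_apply]

lemma tensorId_smul_M (L : Matrix (Fin n) (Fin n) ℂ →ₗ[ℂ] Matrix (Fin m) (Fin m) ℂ) (N : ℕ)
    (c : ℂ) (M : Matrix (Fin n × Fin N) (Fin n × Fin N) ℂ) :
    tensorId L N (c • M) = c • tensorId L N M := by
  ext ⟨p1, p2⟩ ⟨q1, q2⟩
  simp only [tensorId, of_apply, Matrix.smul_apply]
  rw [show (Matrix.of fun i j => c • M (i,p2) (j,q2))
      = c • (Matrix.of fun i j => M (i, p2) (j, q2)) from rfl, _root_.map_smul, Matrix.smul_apply]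

lemma tensorId_norm_le (L : Matrix (Fin n) (Fin n) ℂ →L[ℂ] Matrix (Fin m) (Fin m) ℂ) (N : ℕ)
    (M : Matrix (Fin n × Fin N) (Fin n × Fin N) ℂ) :
    ‖tensorId L.toLinearMap N M‖ ≤ ‖L‖ * ‖M‖ := by
  rw [Matrix.norm_le_iff (by positivity)]
  intro p q
  have h1 : tensorId L.toLinearMap N M p q
      = L (Matrix.of fun i j => M (i, p.2) (j, q.2)) p.1 q.1 := rfl
  rw [h1]
  refine le_trans (Matrix.norm_entry_le_entrywise_sup_norm _) ?_
  refine le_trans (L.le_opNorm _) ?_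
  refine mul_le_mul_of_nonneg_left ?_ (norm_nonneg _)
  rw [Matrix.norm_le_iff (norm_nonneg _)]
  intro i j
  exact Matrix.norm_entry_le_entrywise_sup_norm M

lemma tensorId_mulLeft (K : Matrix (Fin n) (Fin n) ℂ) (N : ℕ)
    (B : Matrix (Fin n × Fin N) (Fin n × Fin N) ℂ) :
    tensorId (LinearMap.mulLeft ℂ K) N B = (K ⊗ₖ (1 : Matrix (Fin N) (Fin N) ℂ)) * B := by
  ext ⟨p1, p2⟩ ⟨q1, q2⟩
  simp only [tensorId, of_apply, LinearMap.mulLeft_apply, Matrix.mul_apply,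
    Matrix.kroneckerMap_apply, Matrix.one_apply]
  rw [Fintype.sum_prod_type]
  simp only [ite_mul, one_mul, zero_mul, mul_ite, mul_zero, mul_one]
  rw [Finset.sum_comm]
  simp [Finset.sum_ite_eq' , Finset.sum_ite_eq]

lemma tensorId_mulRight (K : Matrix (Fin n) (Fin n) ℂ) (N : ℕ)
    (B : Matrix (Fin n × Fin N) (Fin n × Fin N) ℂ) :
    tensorId (LinearMap.mulRight ℂ K) N B = B * (K ⊗ₖ (1 : Matrix (Fin N) (Fin N) ℂ)) := by
  ext ⟨p1, p2⟩ ⟨q1, q2⟩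
  simp only [tensorId, of_apply, LinearMap.mulRight_apply, Matrix.mul_apply,
    Matrix.kroneckerMap_apply, Matrix.one_apply]
  rw [Fintype.sum_prod_type]
  simp only [ite_mul, one_mul, zero_mul, mul_ite, mul_zero, mul_one]
  simp [Finset.sum_ite_eq', Finset.sum_ite_eq]

lemma dot_self_eq (d : Type*) [Fintype d] (x : d → ℂ) :
    star x ⬝ᵥ x = ((∑ i, ‖x i‖^2 : ℝ) : ℂ) := by
  have hterm : ∀ z : ℂ, star z * z = ((‖z‖^2 : ℝ) : ℂ) := fun z => by
    rw [Complex.star_def, mul_comm]; exact_mod_cast Complex.mul_conj' z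
  simp only [dotProduct, Pi.star_apply, hterm]
  push_cast
  rfl

lemma quad_bound (d : Type*) [Fintype d] (C : Matrix d d ℂ) (x : d → ℂ) :
    ‖star x ⬝ᵥ C *ᵥ x‖ ≤ (Fintype.card d) * ‖C‖ * ∑ i, ‖x i‖^2 := by
  have h1 : ‖star x ⬝ᵥ C *ᵥ x‖ ≤ ∑ i, ∑ j, ‖x i‖ * ‖C i j‖ * ‖x j‖ := by
    refine le_trans (norm_sum_le _ _) (Finset.sum_le_sum fun i _ => ?_)
    simp only [Matrix.mulVec, dotProduct, Pi.star_apply]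
    refine le_trans (norm_mul_le _ _) ?_
    rw [norm_star]
    refine le_trans (mul_le_mul_of_nonneg_left (norm_sum_le _ _) (norm_nonneg _)) ?_
    rw [Finset.mul_sum]
    refine Finset.sum_le_sum fun j _ => ?_
    calc ‖x i‖ * ‖C i j * x j‖ ≤ ‖x i‖ * (‖C i j‖ * ‖x j‖) :=
          mul_le_mul_of_nonneg_left (norm_mul_le _ _) (norm_nonneg _)
      _ = ‖x i‖ * ‖C i j‖ * ‖x j‖ := by ring
  have h2 : ∑ i, ∑ j, ‖x i‖ * ‖C i j‖ * ‖x j‖ ≤ ‖C‖ * (∑ i, ‖x i‖)^2 := by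
    have : ∀ i j, ‖x i‖ * ‖C i j‖ * ‖x j‖ ≤ ‖C‖ * (‖x i‖ * ‖x j‖) := fun i j => by
      have := Matrix.norm_entry_le_entrywise_sup_norm C (i := i) (j := j)
      calc ‖x i‖ * ‖C i j‖ * ‖x j‖ = ‖C i j‖ * (‖x i‖ * ‖x j‖) := by ring
        _ ≤ ‖C‖ * (‖x i‖ * ‖x j‖) := mul_le_mul_of_nonneg_right this (by positivity)
    calc ∑ i, ∑ j, ‖x i‖ * ‖C i j‖ * ‖x j‖ ≤ ∑ i, ∑ j, ‖C‖ * (‖x i‖ * ‖x j‖) :=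
          Finset.sum_le_sum fun i _ => Finset.sum_le_sum fun j _ => this i j
      _ = ‖C‖ * (∑ i, ‖x i‖)^2 := by
          rw [sq, Finset.sum_mul_sum]
          rw [Finset.mul_sum]
          refine Finset.sum_congr rfl fun i _ => ?_
          rw [Finset.mul_sum]
  have h3 : (∑ i, ‖x i‖)^2 ≤ (Fintype.card d) * ∑ i, ‖x i‖^2 := by
    have := Finset.sum_mul_sq_le_sq_mul_sq Finset.univ (fun i : d => ‖x i‖) (fun _ => 1)
    simp only [mul_one, one_pow] at this
    calc (∑ i, ‖x i‖)^2 ≤ (∑ i : d, ‖x i‖^2) * (∑ _i : d, (1:ℝ)) := this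
      _ = (Fintype.card d) * ∑ i, ‖x i‖^2 := by
          simp [Finset.sum_const, Finset.card_univ, mul_comm]
  calc ‖star x ⬝ᵥ C *ᵥ x‖ ≤ ‖C‖ * (∑ i, ‖x i‖)^2 := h1.trans h2
    _ ≤ ‖C‖ * ((Fintype.card d) * ∑ i, ‖x i‖^2) :=
        mul_le_mul_of_nonneg_left h3 (norm_nonneg _)
    _ = (Fintype.card d) * ‖C‖ * ∑ i, ‖x i‖^2 := by ring

lemma herm_dot_real {d : Type*} [Fintype d] {A : Matrix d d ℂ} (hA : A.IsHermitian)
    (x : d → ℂ) : star (star x ⬝ᵥ A *ᵥ x) = star x ⬝ᵥ A *ᵥ x := by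
  nth_rewrite 2 [← hA.eq]
  rw [Matrix.star_dotProduct, star_star, Matrix.star_mulVec,
    Matrix.dotProduct_mulVec]

lemma psd_smul_one {d : Type*} [Fintype d] [DecidableEq d] {c : ℝ} (hc : 0 ≤ c) :
    ((c:ℂ) • (1 : Matrix d d ℂ)).PosSemidef := by
  refine Matrix.PosSemidef.of_dotProduct_mulVec_nonneg ?_ ?_
  · unfold Matrix.IsHermitian
    rw [Matrix.conjTranspose_smul, Matrix.conjTranspose_one]
    congr 1
    simp [Complex.star_def, Complex.conj_ofReal]
  · intro x
    rw [Matrix.smul_mulVec, Matrix.one_mulVec, dotProduct_smul,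
      dot_self_eq]
    rw [smul_eq_mul, ← Complex.ofReal_mul]
    rw [Complex.zero_le_real]
    positivity

lemma cp_posMap {Ψ : Matrix (Fin n) (Fin n) ℂ →ₗ[ℂ] Matrix (Fin m) (Fin m) ℂ}
    (hΨ : CP Ψ) {ρ : Matrix (Fin n) (Fin n) ℂ} (hρ : ρ.PosSemidef) :
    (Ψ ρ).PosSemidef := by
  have hsub : (ρ.submatrix (fun p : Fin n × Fin 1 => p.1) (fun p => p.1)).PosSemidef :=
    hρ.submatrix _
  have h1 := hΨ 1 le_rfl _ hsub
  have heq : tensorId Ψ 1 (ρ.submatrix (fun p : Fin n × Fin 1 => p.1) (fun p => p.1))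
      = (Ψ ρ).submatrix (fun p : Fin m × Fin 1 => p.1) (fun p => p.1) := by
    ext ⟨p1, p2⟩ ⟨q1, q2⟩
    simp only [tensorId, Matrix.of_apply, Matrix.submatrix_apply]
    congr 1
  rw [heq] at h1
  let e : Fin m ≃ Fin m × Fin 1 :=
    ⟨fun i => (i, 0), fun p => p.1, fun i => rfl, fun p => Prod.ext rfl (Subsingleton.elim _ _)⟩
  have : (Ψ ρ).submatrix (fun p : Fin m × Fin 1 => p.1) (fun p => p.1)
      = (Ψ ρ).submatrix e.symm e.symm := rfl
  rw [this] at h1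
  exact (Matrix.posSemidef_submatrix_equiv e.symm).mp h1

lemma herm_shift {d : Type*} [Fintype d] [DecidableEq d] {ρ : Matrix d d ℂ}
    (hρ : ρ.IsHermitian) :
    ∃ c : ℝ, 0 ≤ c ∧ (ρ + (c:ℂ) • 1).PosSemidef := by
  refine ⟨(Fintype.card d) * ‖ρ‖, by positivity, Matrix.PosSemidef.of_dotProduct_mulVec_nonneg ?_ ?_⟩
  · exact hρ.add (psd_smul_one (by positivity)).1
  · intro x
    rw [Matrix.add_mulVec, dotProduct_add]
    set z := star x ⬝ᵥ ρ *ᵥ x with hz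
    have hzr : star z = z := herm_dot_real hρ x
    have him : z.im = 0 := by
      have := congrArg Complex.im hzr
      simp only [Complex.star_def, Complex.conj_im] at this
      linarith
    have hre : -((Fintype.card d) * ‖ρ‖ * ∑ i, ‖x i‖^2) ≤ z.re := by
      have h1 : |z.re| ≤ ‖z‖ := Complex.abs_re_le_norm z
      have h2 := quad_bound d ρ x
      rw [← hz] at h2
      have := neg_abs_le z.re
      linarith
    rw [Matrix.smul_mulVec, Matrix.one_mulVec, dotProduct_smul, dot_self_eq]
    rw [smul_eq_mul]
    rw [Complex.le_def]
    constructor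
    · simp only [Complex.zero_re, Complex.add_re, Complex.mul_re, Complex.ofReal_re,
        Complex.ofReal_im, Complex.zero_im, mul_zero, zero_mul, sub_zero]
      linarith
    · rw [Complex.zero_im, Complex.add_im, him, ← Complex.ofReal_mul, Complex.ofReal_im]
      norm_num

lemma posMap_herm {Ψ : Matrix (Fin n) (Fin n) ℂ →ₗ[ℂ] Matrix (Fin m) (Fin m) ℂ}
    (hpos : ∀ ρ : Matrix (Fin n) (Fin n) ℂ, ρ.PosSemidef → (Ψ ρ).PosSemidef)
    {ρ : Matrix (Fin n) (Fin n) ℂ} (hρ : ρ.IsHermitian) : (Ψ ρ).IsHermitian := by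
  obtain ⟨c, hc, hpsd⟩ := herm_shift hρ
  have h1 : (Ψ (ρ + (c:ℂ) • 1)).IsHermitian := (hpos _ hpsd).1
  have h2 : (Ψ ((c:ℂ) • 1)).IsHermitian := (hpos _ (psd_smul_one hc)).1
  have : Ψ ρ = Ψ (ρ + (c:ℂ) • 1) - Ψ ((c:ℂ) • 1) := by
    rw [← map_sub]
    congr 1
    abel
  rw [this]
  exact h1.sub h2

lemma posMap_star {Ψ : Matrix (Fin n) (Fin n) ℂ →ₗ[ℂ] Matrix (Fin m) (Fin m) ℂ}
    (hpos : ∀ ρ : Matrix (Fin n) (Fin n) ℂ, ρ.PosSemidef → (Ψ ρ).PosSemidef)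
    (ρ : Matrix (Fin n) (Fin n) ℂ) : Ψ ρᴴ = (Ψ ρ)ᴴ := by
  have h2 : ∀ σ : Matrix (Fin n) (Fin n) ℂ, σ.IsHermitian → (Ψ σ).IsHermitian :=
    fun σ hσ => posMap_herm hpos hσ
  set H1 : Matrix (Fin n) (Fin n) ℂ := ((1/2 : ℝ) : ℂ) • (ρ + ρᴴ) with hH1
  set H2 : Matrix (Fin n) (Fin n) ℂ := (-(Complex.I)/2) • (ρ - ρᴴ) with hH2
  have hH1h : H1.IsHermitian := by
    unfold Matrix.IsHermitian
    rw [hH1, Matrix.conjTranspose_smul, Matrix.conjTranspose_add,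
      Matrix.conjTranspose_conjTranspose]
    rw [show star (((1/2 : ℝ) : ℂ)) = ((1/2 : ℝ) : ℂ) by
      simp [Complex.star_def, Complex.conj_ofReal]]
    rw [add_comm]
  have hH2h : H2.IsHermitian := by
    unfold Matrix.IsHermitian
    rw [hH2, Matrix.conjTranspose_smul, Matrix.conjTranspose_sub,
      Matrix.conjTranspose_conjTranspose]
    rw [show star (-(Complex.I)/2) = -(-(Complex.I)/2) by
      simp [Complex.star_def]; ring]
    rw [neg_smul, ← smul_neg]
    congr 1
    abel
  have hρeq : ρ = H1 + Complex.I • H2 := by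
    rw [hH1, hH2, smul_smul]
    rw [show Complex.I * (-(Complex.I)/2) = ((1/2:ℝ):ℂ) by
      push_cast; rw [div_eq_mul_inv, div_eq_mul_inv]; ring_nf; rw [Complex.I_sq]; ring]
    rw [← smul_add]
    rw [show ρ + ρᴴ + (ρ - ρᴴ) = (2:ℂ) • ρ by push_cast; rw [two_smul]; abel]
    rw [smul_smul]
    rw [show ((1/2:ℝ):ℂ) * 2 = 1 by push_cast; ring]
    rw [one_smul]
  have hρHeq : ρᴴ = H1 - Complex.I • H2 := by
    rw [hH1, hH2, smul_smul]
    rw [show Complex.I * (-(Complex.I)/2) = ((1/2:ℝ):ℂ) by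
      push_cast; rw [div_eq_mul_inv, div_eq_mul_inv]; ring_nf; rw [Complex.I_sq]; ring]
    rw [← smul_sub]
    rw [show ρ + ρᴴ - (ρ - ρᴴ) = (2:ℂ) • ρᴴ by push_cast; rw [two_smul]; abel]
    rw [smul_smul]
    rw [show ((1/2:ℝ):ℂ) * 2 = 1 by push_cast; ring]
    rw [one_smul]
  calc Ψ ρᴴ = Ψ H1 - Complex.I • Ψ H2 := by
        rw [hρHeq, map_sub, LinearMap.map_smul, LinearMap.map_smul Ψ Complex.I H2]
    _ = (Ψ H1)ᴴ - Complex.I • (Ψ H2)ᴴ := by rw [(h2 _ hH1h).eq, (h2 _ hH2h).eq]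
    _ = (Ψ H1 + Complex.I • Ψ H2)ᴴ := by
        rw [Matrix.conjTranspose_add, Matrix.conjTranspose_smul]
        rw [show star Complex.I = -Complex.I by simp [Complex.star_def]]
        rw [neg_smul]
        abel
    _ = (Ψ ρ)ᴴ := by rw [hρeq, map_add, LinearMap.map_smul, LinearMap.map_smul Ψ Complex.I H2]

lemma tensorId_conjTranspose {L : Matrix (Fin n) (Fin n) ℂ →ₗ[ℂ] Matrix (Fin m) (Fin m) ℂ}
    (hstar : ∀ ρ, L ρᴴ = (L ρ)ᴴ) (N : ℕ) (B : Matrix (Fin n × Fin N) (Fin n × Fin N) ℂ) :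
    (tensorId L N B)ᴴ = tensorId L N Bᴴ := by
  ext ⟨p1, p2⟩ ⟨q1, q2⟩
  simp only [tensorId, Matrix.conjTranspose_apply, Matrix.of_apply]
  have h1 : (Matrix.of fun i j => star (B (j, q2) (i, p2)))
      = (Matrix.of (fun i j => B (i, q2) (j, p2)))ᴴ := by
    ext i j; simp [Matrix.conjTranspose_apply]
  rw [h1, hstar, Matrix.conjTranspose_apply]

lemma lind_star {L Ψ : Matrix (Fin n) (Fin n) ℂ →ₗ[ℂ] Matrix (Fin n) (Fin n) ℂ}
    {G H : Matrix (Fin n) (Fin n) ℂ}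
    (hΨpos : ∀ ρ : Matrix (Fin n) (Fin n) ℂ, ρ.PosSemidef → (Ψ ρ).PosSemidef)
    (hG : G.IsHermitian) (hH : H.IsHermitian)
    (hform : ∀ ρ, L ρ = Ψ ρ - (G * ρ + ρ * G) - Complex.I • (H * ρ - ρ * H)) :
    ∀ ρ, L ρᴴ = (L ρ)ᴴ := by
  intro ρ
  rw [hform, hform]
  rw [posMap_star hΨpos]
  rw [Matrix.conjTranspose_sub, Matrix.conjTranspose_sub, Matrix.conjTranspose_add,
    Matrix.conjTranspose_smul, Matrix.conjTranspose_sub, Matrix.conjTranspose_mul,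
    Matrix.conjTranspose_mul, Matrix.conjTranspose_mul, Matrix.conjTranspose_mul,
    hG.eq, hH.eq]
  rw [show (star Complex.I) = -Complex.I by simp [Complex.star_def]]
  rw [neg_smul, smul_sub, smul_sub]
  abel

noncomputable def tensorIdCLMr (n N : ℕ) (M : Matrix (Fin n × Fin N) (Fin n × Fin N) ℂ) :
    (Matrix (Fin n) (Fin n) ℂ →L[ℂ] Matrix (Fin n) (Fin n) ℂ) →L[ℝ]
      Matrix (Fin n × Fin N) (Fin n × Fin N) ℂ :=
  LinearMap.toContinuousLinearMap
  { toFun := fun L => tensorId L.toLinearMap N M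
    map_add' := by
      intro L L'
      ext ⟨p1, p2⟩ ⟨q1, q2⟩
      simp [tensorId, Matrix.add_apply]
    map_smul' := by
      intro r L
      ext ⟨p1, p2⟩ ⟨q1, q2⟩
      simp [tensorId, Matrix.smul_apply] }

@[simp] lemma tensorIdCLMr_apply (n N : ℕ) (M : Matrix (Fin n × Fin N) (Fin n × Fin N) ℂ)
    (L : Matrix (Fin n) (Fin n) ℂ →L[ℂ] Matrix (Fin n) (Fin n) ℂ) :
    tensorIdCLMr n N M L = tensorId L.toLinearMap N M := rfl

noncomputable def ctCLM (d : Type*) [Fintype d] :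
    Matrix d d ℂ →L[ℝ] Matrix d d ℂ :=
  LinearMap.toContinuousLinearMap
  { toFun := fun A => Aᴴ
    map_add' := by intro A B; show (A + B)ᴴ = Aᴴ + Bᴴ; rw [Matrix.conjTranspose_add]
    map_smul' := by
      intro r A
      ext i j
      simp [Matrix.conjTranspose_apply, star_smul] }

@[simp] lemma ctCLM_apply (d : Type*) [Fintype d] (A : Matrix d d ℂ) : ctCLM d A = Aᴴ := rfl

noncomputable def dotCLM (d : Type*) [Fintype d] (x : d → ℂ) :
    Matrix d d ℂ →L[ℝ] ℂ :=
  LinearMap.toContinuousLinearMap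
  { toFun := fun C => star x ⬝ᵥ C *ᵥ x
    map_add' := by
      intro A B
      show star x ⬝ᵥ (A + B) *ᵥ x = star x ⬝ᵥ A *ᵥ x + star x ⬝ᵥ B *ᵥ x
      rw [Matrix.add_mulVec, dotProduct_add]
    map_smul' := by
      intro r A
      show star x ⬝ᵥ (r • A) *ᵥ x = r • (star x ⬝ᵥ A *ᵥ x)
      rw [show (r • A) = ((r : ℂ) • A) by
        ext i j; simp only [Matrix.smul_apply]; rw [Complex.real_smul, smul_eq_mul]]
      rw [Matrix.smul_mulVec, dotProduct_smul, smul_eq_mul, Complex.real_smul] }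

@[simp] lemma dotCLM_apply (d : Type*) [Fintype d] (x : d → ℂ) (C : Matrix d d ℂ) :
    dotCLM d x C = star x ⬝ᵥ C *ᵥ x := rfl

lemma psd_of_herm_re_nonneg {d : Type*} [Fintype d] [DecidableEq d] {B : Matrix d d ℂ}
    (hB : B.IsHermitian)
    (h : ∀ x : d → ℂ, (∑ i, ‖x i‖^2) = 1 → 0 ≤ (star x ⬝ᵥ B *ᵥ x).re) :
    B.PosSemidef := by
  refine Matrix.PosSemidef.of_dotProduct_mulVec_nonneg hB (fun z => ?_)
  have him : (star z ⬝ᵥ B *ᵥ z).im = 0 := by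
    have := herm_dot_real hB z
    have := congrArg Complex.im this
    simp only [Complex.star_def, Complex.conj_im] at this
    linarith
  have hre : 0 ≤ (star z ⬝ᵥ B *ᵥ z).re := by
    by_cases hz : z = 0
    · simp [hz]
    · set c2 : ℝ := ∑ i, ‖z i‖^2 with hc2
      have hc2pos : 0 < c2 := by
        rw [hc2]
        obtain ⟨i, hi⟩ := Function.ne_iff.mp hz
        exact Finset.sum_pos' (fun j _ => by positivity)
          ⟨i, Finset.mem_univ i, pow_pos (norm_pos_iff.mpr hi) 2⟩
      set r : ℝ := (Real.sqrt c2)⁻¹ with hr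
      have hrpos : 0 < r := by
        rw [hr]
        positivity
      set y : d → ℂ := ((r : ℝ) : ℂ) • z with hy
      have hyE : ∑ i, ‖y i‖^2 = 1 := by
        rw [hy]
        simp only [Pi.smul_apply, norm_smul, Complex.norm_real, mul_pow]
        rw [← Finset.mul_sum, ← hc2]
        rw [Real.norm_eq_abs, sq_abs, hr, inv_pow, Real.sq_sqrt hc2pos.le]
        exact inv_mul_cancel₀ hc2pos.ne' 
      have hval : star y ⬝ᵥ B *ᵥ y = ((r^2 : ℝ) : ℂ) * (star z ⬝ᵥ B *ᵥ z) := by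
        rw [hy]
        rw [show star (((r:ℝ):ℂ) • z) = ((r:ℝ):ℂ) • star z by
          ext i; simp [star_smul, Complex.star_def, Complex.conj_ofReal]]
        rw [Matrix.mulVec_smul, dotProduct_smul, smul_dotProduct]
        rw [smul_eq_mul, smul_eq_mul, ← mul_assoc]
        push_cast
        ring
      have h0 := h y hyE
      rw [hval] at h0
      simp only [Complex.mul_re, Complex.ofReal_re, Complex.ofReal_im, zero_mul, sub_zero] at h0
      by_contra hneg
      push_neg at hneg
      have := mul_neg_of_pos_of_neg (pow_pos hrpos 2) hneg
      linarith
  rw [Complex.le_def]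
  constructor
  · simpa using hre
  · simp [him]

lemma tensorId_sub_L (L1 L2 : Matrix (Fin n) (Fin n) ℂ →ₗ[ℂ] Matrix (Fin m) (Fin m) ℂ)
    (N : ℕ) (M : Matrix (Fin n × Fin N) (Fin n × Fin N) ℂ) :
    tensorId (L1 - L2) N M = tensorId L1 N M - tensorId L2 N M := by
  ext ⟨p1, p2⟩ ⟨q1, q2⟩
  simp [tensorId, Matrix.sub_apply]

lemma tensorId_add_L (L1 L2 : Matrix (Fin n) (Fin n) ℂ →ₗ[ℂ] Matrix (Fin m) (Fin m) ℂ)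
    (N : ℕ) (M : Matrix (Fin n × Fin N) (Fin n × Fin N) ℂ) :
    tensorId (L1 + L2) N M = tensorId L1 N M + tensorId L2 N M := by
  ext ⟨p1, p2⟩ ⟨q1, q2⟩
  simp [tensorId, Matrix.add_apply]

noncomputable def entryCLM (d : Type*) [Fintype d] (i j : d) : Matrix d d ℂ →L[ℝ] ℂ :=
  LinearMap.toContinuousLinearMap
  { toFun := fun B => B i j
    map_add' := fun _ _ => rfl
    map_smul' := fun _ _ => rfl }

@[simp] lemma entryCLM_apply (d : Type*) [Fintype d] (i j : d) (B : Matrix d d ℂ) :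
    entryCLM d i j B = B i j := rfl

lemma norm_one_matrix_le' (d : Type*) [Fintype d] [DecidableEq d] :
    ‖(1 : Matrix d d ℂ)‖ ≤ 1 := by
  rw [Matrix.norm_le_iff zero_le_one]
  intro i j
  rw [Matrix.one_apply]
  split <;> simp

lemma norm_one_matrix_le (n : ℕ) : ‖(1 : Matrix (Fin n) (Fin n) ℂ)‖ ≤ 1 := by
  rw [Matrix.norm_le_iff zero_le_one]
  intro i j
  rw [Matrix.one_apply]
  split <;> simp

end GKSL19

open GKSL19

/-- time-dependent GKSL sufficiency, finite dimensions: if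
`ℒ : (α,ω) → End(M_n(ℂ))` is continuous and each `ℒ(t)` has a GKSL presentation
`L(Ψ_t, G_t, H_t)` with `Ψ_t` completely positive and `G_t`, `H_t` Hermitian, then the
solution `Λ(t,s)` of `∂Λ(t,s)/∂t = ℒ(t) ∘ Λ(t,s)`, `Λ(s,s) = id`, is completely positive
for all `α < s ≤ t < ω`. -/
theorem time_dependent_gksl_sufficiency {n : ℕ}
    (α ω : EReal) (hαω : α < ω)
    (ℒ : ℝ → (Matrix (Fin n) (Fin n) ℂ →L[ℂ] Matrix (Fin n) (Fin n) ℂ))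
    (hcont : ContinuousOn ℒ {t : ℝ | α < (t : EReal) ∧ (t : EReal) < ω})
    (hGKSL : ∀ t : ℝ, α < (t : EReal) → (t : EReal) < ω →
      ∃ (Ψ : Matrix (Fin n) (Fin n) ℂ →ₗ[ℂ] Matrix (Fin n) (Fin n) ℂ)
        (G H : Matrix (Fin n) (Fin n) ℂ),
        CP Ψ ∧ G.IsHermitian ∧ H.IsHermitian ∧
        ∀ ρ : Matrix (Fin n) (Fin n) ℂ,
          ℒ t ρ = Ψ ρ - (G * ρ + ρ * G) - Complex.I • (H * ρ - ρ * H))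
    (Λ : ℝ → ℝ → (Matrix (Fin n) (Fin n) ℂ →L[ℂ] Matrix (Fin n) (Fin n) ℂ))
    (hid : ∀ s : ℝ, α < (s : EReal) → (s : EReal) < ω → Λ s s = 1)
    (hderiv : ∀ s t : ℝ, α < (s : EReal) → s ≤ t → (t : EReal) < ω →
      HasDerivWithinAt (fun τ : ℝ => Λ τ s) ((ℒ t).comp (Λ t s))
        {τ : ℝ | s ≤ τ ∧ (τ : EReal) < ω} t) :
    ∀ s t : ℝ, α < (s : EReal) → s ≤ t → (t : EReal) < ω →
      CP (Λ t s).toLinearMap := by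
  letI : NormedAddCommGroup (Matrix (Fin n) (Fin n) ℂ →L[ℂ] Matrix (Fin n) (Fin n) ℂ) :=
    ContinuousLinearMap.toNormedAddCommGroup
  letI : NormedSpace ℝ (Matrix (Fin n) (Fin n) ℂ →L[ℂ] Matrix (Fin n) (Fin n) ℂ) :=
    ContinuousLinearMap.toNormedSpace
  intro s t hαs hst htω
  have hsω : (s : EReal) < ω := lt_of_le_of_lt (EReal.coe_le_coe_iff.mpr hst) htω
  set S : Set ℝ := {τ : ℝ | s ≤ τ ∧ (τ : EReal) < ω} with hS
  -- a real number u with t < u and (u : EReal) < ω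
  obtain ⟨c, hc1, hc2⟩ := exists_between htω
  have hcnetop : c ≠ ⊤ := (lt_of_lt_of_le hc2 le_top).ne
  have hcnebot : c ≠ ⊥ := (lt_trans (EReal.bot_lt_coe t) hc1).ne'
  set u : ℝ := c.toReal with hu
  have hcu : (u : EReal) = c := EReal.coe_toReal hcnetop hcnebot
  have htu : t < u := by
    rw [← EReal.coe_lt_coe_iff, hcu]
    exact hc1
  have huω : (u : EReal) < ω := by rw [hcu]; exact hc2
  -- membership facts
  have hIccS : Set.Icc s t ⊆ S := by
    intro τ hτ
    exact ⟨hτ.1, lt_of_le_of_lt (EReal.coe_le_coe_iff.mpr hτ.2) htω⟩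
  have hIccIn : ∀ τ ∈ Set.Icc s t, α < (τ : EReal) ∧ (τ : EReal) < ω := by
    intro τ hτ
    exact ⟨lt_of_lt_of_le hαs (EReal.coe_le_coe_iff.mpr hτ.1),
      lt_of_le_of_lt (EReal.coe_le_coe_iff.mpr hτ.2) htω⟩
  -- bound on the generator over [s, t]
  obtain ⟨K0, hK0⟩ := (isCompact_Icc (a := s) (b := t)).exists_bound_of_continuousOn
    (hcont.mono (fun τ hτ => hIccIn τ hτ))
  set Kb : ℝ := max K0 0 with hKb
  have hKbnn : 0 ≤ Kb := le_max_right _ _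
  have hKbb : ∀ τ ∈ Set.Icc s t, ‖ℒ τ‖ ≤ Kb := fun τ hτ => (hK0 τ hτ).trans (le_max_left _ _)
  -- fix N and a PSD matrix
  intro N hN Mmat hM
  set A : ℝ → Matrix (Fin n × Fin N) (Fin n × Fin N) ℂ :=
    fun τ => tensorIdCLMr n N Mmat (Λ τ s) with hA
  have hAt : tensorId (Λ t s).toLinearMap N Mmat = A t := rfl
  rw [show tensorId (Λ t s).toLinearMap N Mmat = A t from rfl]
  -- derivative of A
  have hAd : ∀ τ ∈ Set.Icc s t,
      HasDerivWithinAt A (tensorId ((ℒ τ).toLinearMap) N (A τ)) S τ := by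
    intro τ hτ
    have h1 := (tensorIdCLMr n N Mmat).hasFDerivAt.comp_hasDerivWithinAt τ
      (hderiv s τ hαs hτ.1 (hIccIn τ hτ).2)
    have h2 : tensorIdCLMr n N Mmat ((ℒ τ).comp (Λ τ s))
        = tensorId ((ℒ τ).toLinearMap) N (A τ) := by
      rw [tensorIdCLMr_apply, ContinuousLinearMap.toLinearMap_comp, tensorId_comp]
      rfl
    replace h1 := h1.congr_deriv h2
    exact h1
  have hAcont : ContinuousOn A (Set.Icc s t) :=
    fun τ hτ => ((hAd τ hτ).continuousWithinAt).mono hIccS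
  have hAs : A s = Mmat := by
    show tensorId (Λ s s).toLinearMap N Mmat = Mmat
    rw [hid s hαs hsω]
    exact tensorId_id N Mmat
  -- star preservation of the generator
  have hstarL : ∀ τ ∈ Set.Icc s t, ∀ ρ, (ℒ τ).toLinearMap ρᴴ = ((ℒ τ).toLinearMap ρ)ᴴ := by
    intro τ hτ
    obtain ⟨Ψ, G, H, hΨ, hG, hH, hform⟩ := hGKSL τ (hIccIn τ hτ).1 (hIccIn τ hτ).2
    exact lind_star (fun ρ hρ => cp_posMap hΨ hρ) hG hH hform
  -- membership of S in the right-neighborhood filter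
  have hSnhds : ∀ τ ∈ Set.Icc s t, S ∈ nhdsWithin τ (Set.Ici τ) := by
    intro τ hτ
    refine Filter.mem_of_superset (inter_mem_nhdsWithin (Set.Ici τ) (Iio_mem_nhds (lt_of_le_of_lt hτ.2 htu))) ?_
    rintro σ ⟨hσ1, hσ2⟩
    exact ⟨le_trans hτ.1 hσ1, lt_of_lt_of_le (lt_of_lt_of_eq (EReal.coe_lt_coe_iff.mpr hσ2) hcu) hc2.le⟩
  -- Step A : A τ is Hermitian on [s, t]
  have hherm : ∀ τ ∈ Set.Icc s t, (A τ).IsHermitian := by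
    intro τ hτ
    set D : ℝ → Matrix (Fin n × Fin N) (Fin n × Fin N) ℂ := fun σ => (A σ)ᴴ - A σ with hD
    have hDd : ∀ σ ∈ Set.Ico s t,
        HasDerivWithinAt D (tensorId ((ℒ σ).toLinearMap) N (D σ)) (Set.Ici σ) σ := by
      intro σ hσ
      have hσt : σ ∈ Set.Icc s t := ⟨hσ.1, hσ.2.le⟩
      have h1 := ((ctCLM (Fin n × Fin N)).hasFDerivAt.comp_hasDerivWithinAt σ
        (hAd σ hσt)).sub (hAd σ hσt)
      have h2 : ctCLM (Fin n × Fin N) (tensorId ((ℒ σ).toLinearMap) N (A σ))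
            - tensorId ((ℒ σ).toLinearMap) N (A σ)
          = tensorId ((ℒ σ).toLinearMap) N (D σ) := by
        rw [ctCLM_apply, tensorId_conjTranspose (hstarL σ hσt), hD]
        rw [tensorId_sub_M]
      replace h1 := h1.congr_deriv h2
      exact (h1.mono_of_mem_nhdsWithin (hSnhds σ hσt))
    have hDcont : ContinuousOn D (Set.Icc s t) :=
      (((ctCLM (Fin n × Fin N)).continuous.comp_continuousOn hAcont).sub hAcont)
    have hDs : D s = 0 := by
      rw [hD]
      simp only [hAs]
      rw [hM.1.eq, sub_self]
    have hgron := norm_le_gronwallBound_of_norm_deriv_right_le (δ := 0) (K := Kb) (ε := 0)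
      hDcont hDd (by rw [hDs]; simp) (fun σ hσ => by
        rw [add_zero]
        refine le_trans (tensorId_norm_le (ℒ σ) N (D σ)) ?_
        exact mul_le_mul_of_nonneg_right (hKbb σ ⟨hσ.1, hσ.2.le⟩) (norm_nonneg _))
    have hDτ := hgron τ hτ
    rw [gronwallBound_ε0_δ0] at hDτ
    have : D τ = 0 := by
      have := norm_le_zero_iff.mp hDτ
      exact this
    unfold Matrix.IsHermitian
    have h3 : (A τ)ᴴ - A τ = 0 := this
    exact sub_eq_zero.mp h3
    -- Step B : positivity via a first-crossing argument
  set d : ℕ := Fintype.card (Fin n × Fin N) with hd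
  set Cg : ℝ := (d : ℝ) * Kb + 1 with hCg
  set E : Set ((Fin n × Fin N) → ℂ) := {x | ∑ i, ‖x i‖^2 = 1} with hE
  have key : ∀ ε : ℝ, 0 < ε → ∀ τ ∈ Set.Icc s t, ∀ x ∈ E,
      0 < (star x ⬝ᵥ (A τ) *ᵥ x).re + ε * Real.exp (Cg * (τ - s)) := by
    intro ε hε
    by_contra hcon
    push_neg at hcon
    obtain ⟨τ1, hτ1, x1, hx1, hle1⟩ := hcon
    set F : ℝ × ((Fin n × Fin N) → ℂ) → ℝ :=
      fun p => (star p.2 ⬝ᵥ (A p.1) *ᵥ p.2).re + ε * Real.exp (Cg * (p.1 - s)) with hF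
    set K : Set (ℝ × ((Fin n × Fin N) → ℂ)) := Set.Icc s t ×ˢ E with hKdef
    set Tset : Set (ℝ × ((Fin n × Fin N) → ℂ)) := {p ∈ K | F p ≤ 0} with hT
    have hTne : Tset.Nonempty := ⟨(τ1, x1), ⟨⟨hτ1, hx1⟩, hle1⟩⟩
    have hEclosed : IsClosed E := by
      have : E = (fun x : (Fin n × Fin N) → ℂ => ∑ i, ‖x i‖^2) ⁻¹' {1} := rfl
      rw [this]
      exact IsClosed.preimage
        (continuous_finset_sum _ fun i _ => ((continuous_apply i).norm.pow 2))
        isClosed_singleton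
    have hEsub : E ⊆ Metric.closedBall 0 1 := by
      intro x hx
      rw [Metric.mem_closedBall, dist_zero_right]
      rw [pi_norm_le_iff_of_nonneg zero_le_one]
      intro i
      have h1 : ‖x i‖^2 ≤ 1 := by
        rw [show (1:ℝ) = ∑ j, ‖x j‖^2 from hx.symm]
        exact Finset.single_le_sum (f := fun j => ‖x j‖^2) (fun j _ => by positivity)
          (Finset.mem_univ i)
      nlinarith [norm_nonneg (x i)]
    have hEcomp : IsCompact E :=
      IsCompact.of_isClosed_subset (isCompact_closedBall 0 1) hEclosed hEsub
    have hKcomp : IsCompact K := isCompact_Icc.prod hEcomp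
    have hFcont : ContinuousOn F K := by
      have h1 : ContinuousOn (fun p : ℝ × ((Fin n × Fin N) → ℂ) => A p.1) K :=
        hAcont.comp continuous_fst.continuousOn (fun p hp => hp.1)
      have h2 : ContinuousOn (fun p : ℝ × ((Fin n × Fin N) → ℂ)
          => star p.2 ⬝ᵥ (A p.1) *ᵥ p.2) K := by
        have heq : (fun p : ℝ × ((Fin n × Fin N) → ℂ) => star p.2 ⬝ᵥ (A p.1) *ᵥ p.2)
            = fun p => ∑ i, star (p.2 i) * ∑ j, entryCLM _ i j (A p.1) * p.2 j := by
          funext p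
          simp only [dotProduct, Matrix.mulVec, Pi.star_apply, entryCLM_apply]
        rw [heq]
        refine continuousOn_finset_sum _ fun i _ => ContinuousOn.mul ?_ ?_
        · exact (continuous_star.comp ((continuous_apply i).comp continuous_snd)).continuousOn
        · refine continuousOn_finset_sum _ fun j _ => ContinuousOn.mul ?_ ?_
          · exact (entryCLM _ i j).continuous.comp_continuousOn h1
          · exact ((continuous_apply j).comp continuous_snd).continuousOn
      refine ContinuousOn.add (Complex.continuous_re.comp_continuousOn h2) ?_
      refine Continuous.continuousOn ?_
      exact (continuous_const.mul (Real.continuous_exp.comp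
        (continuous_const.mul (continuous_fst.sub continuous_const))))
    have hTcomp : IsCompact Tset := by
      have hrestr : Continuous (K.restrict F) := continuousOn_iff_continuous_restrict.mp hFcont
      have hclosed : IsClosed {p : K | F p.1 ≤ 0} :=
        IsClosed.preimage hrestr isClosed_Iic
      haveI := isCompact_iff_compactSpace.mp hKcomp
      have hc2 : IsCompact {p : K | F p.1 ≤ 0} := hclosed.isCompact
      have himg : Tset = Subtype.val '' {p : K | F p.1 ≤ 0} := by
        ext p
        constructor
        · rintro ⟨hpK, hpF⟩
          exact ⟨⟨p, hpK⟩, hpF, rfl⟩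
        · rintro ⟨q, hq, rfl⟩
          exact ⟨q.2, hq⟩
      rw [himg]
      exact hc2.image continuous_subtype_val
    set Tproj : Set ℝ := Prod.fst '' Tset with hTproj
    have hTpc : IsCompact Tproj := hTcomp.image continuous_fst
    have hTpne : Tproj.Nonempty := hTne.image _
    have hτ0mem : sInf Tproj ∈ Tproj := hTpc.sInf_mem hTpne
    obtain ⟨⟨τ0, x0⟩, hpT, hpeq⟩ := hτ0mem
    obtain ⟨⟨hτ0I, hx0E⟩, hF0⟩ := hpT
    have hmin : ∀ p ∈ Tset, τ0 ≤ p.1 := by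
      intro p hp
      have h1 := csInf_le hTpc.bddBelow (Set.mem_image_of_mem Prod.fst hp)
      rw [show τ0 = sInf Tproj from hpeq]
      exact h1
    have hMre : ∀ y : (Fin n × Fin N) → ℂ, 0 ≤ (star y ⬝ᵥ Mmat *ᵥ y).re := by
      intro y
      have := (Complex.le_def.mp (hM.dotProduct_mulVec_nonneg y)).1
      simpa using this
    have hsτ0 : s < τ0 := by
      rcases eq_or_lt_of_le hτ0I.1 with heq | h
      · exfalso
        have hpos : 0 < F (τ0, x0) := by
          have hFval : F (τ0, x0)
              = (star x0 ⬝ᵥ A τ0 *ᵥ x0).re + ε * Real.exp (Cg * (τ0 - s)) := rfl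
          rw [hFval, show τ0 = s from heq.symm, hAs, sub_self, mul_zero, Real.exp_zero,
            mul_one]
          have := hMre x0
          linarith
        linarith
      · exact h
    have hbefore : ∀ σ ∈ Set.Ico s τ0, ∀ y ∈ E, 0 < F (σ, y) := by
      intro σ hσ y hy
      by_contra hc
      push_neg at hc
      have hσI : σ ∈ Set.Icc s t := ⟨hσ.1, le_trans hσ.2.le hτ0I.2⟩
      have hm : (σ, y) ∈ Tset := ⟨⟨hσI, hy⟩, hc⟩
      have := hmin _ hm
      simp only at this
      linarith [hσ.2]
    have hclos : τ0 ∈ closure (Set.Ico s τ0) := by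
      rw [closure_Ico hsτ0.ne]
      exact Set.right_mem_Icc.mpr hsτ0.le
    haveI hNB : (nhdsWithin τ0 (Set.Ico s τ0)).NeBot :=
      mem_closure_iff_nhdsWithin_neBot.mp hclos
    have hIcoIcc : Set.Ico s τ0 ⊆ Set.Icc s t :=
      fun σ hσ => ⟨hσ.1, le_trans hσ.2.le hτ0I.2⟩
    have hcw : ∀ y : (Fin n × Fin N) → ℂ,
        ContinuousWithinAt (fun σ => F (σ, y)) (Set.Ico s τ0) τ0 := by
      intro y
      refine ContinuousWithinAt.mono ?_ hIcoIcc
      refine ContinuousWithinAt.add ?_ ?_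
      · exact (Complex.continuous_re.comp
          (dotCLM _ y).continuous).continuousAt.comp_continuousWithinAt (hAcont τ0 hτ0I)
      · exact (continuous_const.mul (Real.continuous_exp.comp
          (continuous_const.mul (continuous_id.sub continuous_const)))).continuousWithinAt
    have hlim : ∀ y ∈ E, 0 ≤ F (τ0, y) := by
      intro y hy
      refine ge_of_tendsto (hcw y) ?_
      exact Filter.eventually_of_mem self_mem_nhdsWithin
        (fun σ hσ => (hbefore σ hσ y hy).le)
    set δ : ℝ := ε * Real.exp (Cg * (τ0 - s)) with hδdef
    have hδpos : 0 < δ := by positivity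
    set B : Matrix (Fin n × Fin N) (Fin n × Fin N) ℂ := A τ0 + (δ:ℂ) • 1 with hBdef
    have hBherm : B.IsHermitian := (hherm τ0 hτ0I).add (psd_smul_one hδpos.le).1
    have hqB : ∀ y ∈ E, (star y ⬝ᵥ B *ᵥ y).re = F (τ0, y) := by
      intro y hy
      rw [hBdef, Matrix.add_mulVec, dotProduct_add, Matrix.smul_mulVec,
        Matrix.one_mulVec, dotProduct_smul, dot_self_eq]
      rw [show (∑ i, ‖y i‖^2 : ℝ) = 1 from hy]
      rw [Complex.add_re, smul_eq_mul]
      simp only [Complex.ofReal_one, mul_one, Complex.ofReal_re]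
      rfl
    have hBpsd : B.PosSemidef := by
      refine psd_of_herm_re_nonneg hBherm (fun y hy => ?_)
      rw [hqB y hy]
      exact hlim y hy
    have hBx0 : B *ᵥ x0 = 0 := by
      have h0le := hBpsd.dotProduct_mulVec_nonneg x0
      have hre0 : (star x0 ⬝ᵥ B *ᵥ x0).re ≤ 0 := by
        rw [hqB x0 hx0E]
        exact hF0
      have hzero : star x0 ⬝ᵥ B *ᵥ x0 = 0 := by
        have h1 := Complex.le_def.mp h0le
        apply Complex.ext
        · simp only [Complex.zero_re]
          have := h1.1
          simp only [Complex.zero_re] at this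
          linarith
        · have := h1.2
          simp only [Complex.zero_im] at this
          simpa using this.symm
      exact (hBpsd.dotProduct_mulVec_zero_iff x0).mp hzero
    -- derivative of the scalar function at τ0
    set W : Matrix (Fin n × Fin N) (Fin n × Fin N) ℂ :=
      tensorId ((ℒ τ0).toLinearMap) N (A τ0) with hW
    set g : ℝ → ℝ := fun σ => F (σ, x0) with hg
    have hIccsub : Set.Icc s τ0 ⊆ S :=
      fun σ hσ => hIccS ⟨hσ.1, le_trans hσ.2 hτ0I.2⟩
    have hgd : HasDerivWithinAt g
        ((star x0 ⬝ᵥ W *ᵥ x0).re + ε * (Real.exp (Cg * (τ0 - s)) * Cg))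
        (Set.Icc s τ0) τ0 := by
      have h2 := (dotCLM _ x0).hasFDerivAt.comp_hasDerivWithinAt τ0 (hAd τ0 hτ0I)
      have h3 := Complex.reCLM.hasFDerivAt.comp_hasDerivWithinAt τ0 h2
      have h5 : HasDerivAt (fun σ : ℝ => Cg * (σ - s)) Cg τ0 := by
        simpa using ((hasDerivAt_id τ0).sub_const s).const_mul Cg
      have h6 := (h5.exp.const_mul ε)
      have h7 := (h3.add h6.hasDerivWithinAt).mono hIccsub
      convert h7 using 1
      all_goals rfl
    have hgτ0 : g τ0 = 0 := le_antisymm hF0 (hlim x0 hx0E)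
    have hup : (star x0 ⬝ᵥ W *ᵥ x0).re + ε * (Real.exp (Cg * (τ0 - s)) * Cg) ≤ 0 := by
      have hslope := hasDerivWithinAt_iff_tendsto_slope.mp hgd
      rw [Set.Icc_sdiff_right] at hslope
      refine le_of_tendsto hslope ?_
      refine Filter.eventually_of_mem self_mem_nhdsWithin (fun σ hσ => ?_)
      rw [slope_def_field, hgτ0, sub_zero]
      refine div_nonpos_iff.mpr (Or.inl ⟨(hbefore σ hσ x0 hx0E).le, ?_⟩)
      linarith [hσ.2]
    -- lower bound on the derivative
    obtain ⟨Ψ, G, H, hΨ, hG, hH, hform⟩ := hGKSL τ0 (hIccIn τ0 hτ0I).1 (hIccIn τ0 hτ0I).2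
    set Kmat : Matrix (Fin n) (Fin n) ℂ := G + Complex.I • H with hKmat
    have hKmatH : Kmatᴴ = G - Complex.I • H := by
      rw [hKmat, Matrix.conjTranspose_add, Matrix.conjTranspose_smul, hG.eq, hH.eq]
      rw [show star Complex.I = -Complex.I by simp [Complex.star_def]]
      rw [neg_smul]
      abel
    have hsplit : ∀ ρ, (ℒ τ0).toLinearMap ρ
        = (Ψ - (LinearMap.mulLeft ℂ Kmat + LinearMap.mulRight ℂ Kmatᴴ)) ρ := by
      intro ρ
      simp only [LinearMap.sub_apply, LinearMap.add_apply, LinearMap.mulLeft_apply,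
        LinearMap.mulRight_apply, ContinuousLinearMap.coe_coe]
      rw [hform ρ, hKmatH, hKmat]
      rw [Matrix.add_mul, Matrix.mul_sub, Matrix.smul_mul, Matrix.mul_smul, smul_sub]
      abel
    have hWdecomp : tensorId ((ℒ τ0).toLinearMap) N B
        = tensorId Ψ N B - ((Kmat ⊗ₖ (1 : Matrix (Fin N) (Fin N) ℂ)) * B
          + B * (Kmatᴴ ⊗ₖ (1 : Matrix (Fin N) (Fin N) ℂ))) := by
      rw [tensorId_congr hsplit, tensorId_sub_L, tensorId_add_L, tensorId_mulLeft,
        tensorId_mulRight]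
    have hreB : 0 ≤ (star x0 ⬝ᵥ (tensorId ((ℒ τ0).toLinearMap) N B) *ᵥ x0).re := by
      have hz1 : star x0 ⬝ᵥ ((Kmat ⊗ₖ (1 : Matrix (Fin N) (Fin N) ℂ)) * B) *ᵥ x0 = 0 := by
        rw [← Matrix.mulVec_mulVec, hBx0, Matrix.mulVec_zero, dotProduct_zero]
      have hz2 : star x0 ⬝ᵥ (B * (Kmatᴴ ⊗ₖ (1 : Matrix (Fin N) (Fin N) ℂ))) *ᵥ x0 = 0 := by
        rw [← Matrix.mulVec_mulVec, Matrix.dotProduct_mulVec]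
        rw [show star x0 ᵥ* B = star (B *ᵥ x0) by rw [Matrix.star_mulVec, hBherm.eq]]
        rw [hBx0]
        simp
      have hpos := (Complex.le_def.mp ((hΨ N hN B hBpsd).dotProduct_mulVec_nonneg x0)).1
      simp only [Complex.zero_re] at hpos
      rw [hWdecomp, Matrix.sub_mulVec, dotProduct_sub, Matrix.add_mulVec,
        dotProduct_add, hz1, hz2, add_zero, sub_zero]
      exact hpos
    have h1term : |(star x0 ⬝ᵥ (tensorId ((ℒ τ0).toLinearMap) N
        (1 : Matrix (Fin n × Fin N) (Fin n × Fin N) ℂ)) *ᵥ x0).re| ≤ (d:ℝ) * Kb := by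
      have h1 := quad_bound _ (tensorId ((ℒ τ0).toLinearMap) N
        (1 : Matrix (Fin n × Fin N) (Fin n × Fin N) ℂ)) x0
      rw [show (∑ i, ‖x0 i‖^2 : ℝ) = 1 from hx0E] at h1
      rw [mul_one] at h1
      have h2 : ‖tensorId ((ℒ τ0).toLinearMap) N
          (1 : Matrix (Fin n × Fin N) (Fin n × Fin N) ℂ)‖ ≤ Kb := by
        refine le_trans (tensorId_norm_le (ℒ τ0) N 1) ?_
        calc ‖ℒ τ0‖ * ‖(1 : Matrix (Fin n × Fin N) (Fin n × Fin N) ℂ)‖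
            ≤ ‖ℒ τ0‖ * 1 := mul_le_mul_of_nonneg_left (norm_one_matrix_le' _) (norm_nonneg _)
          _ = ‖ℒ τ0‖ := mul_one _
          _ ≤ Kb := hKbb τ0 hτ0I
      refine le_trans (Complex.abs_re_le_norm _) ?_
      refine le_trans h1 ?_
      exact mul_le_mul_of_nonneg_left h2 (by positivity)
    have hWB : W = tensorId ((ℒ τ0).toLinearMap) N B
        - (δ:ℂ) • tensorId ((ℒ τ0).toLinearMap) N
          (1 : Matrix (Fin n × Fin N) (Fin n × Fin N) ℂ) := by
      rw [hW, show A τ0 = B - (δ:ℂ) • 1 by rw [hBdef]; abel]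
      rw [tensorId_sub_M, tensorId_smul_M]
    have hlow : -(δ * ((d:ℝ) * Kb)) ≤ (star x0 ⬝ᵥ W *ᵥ x0).re := by
      rw [hWB, Matrix.sub_mulVec, dotProduct_sub, Matrix.smul_mulVec,
        dotProduct_smul, Complex.sub_re]
      have hsm : ((δ:ℂ) • (star x0 ⬝ᵥ (tensorId ((ℒ τ0).toLinearMap) N
          (1 : Matrix (Fin n × Fin N) (Fin n × Fin N) ℂ)) *ᵥ x0)).re
          = δ * (star x0 ⬝ᵥ (tensorId ((ℒ τ0).toLinearMap) N
          (1 : Matrix (Fin n × Fin N) (Fin n × Fin N) ℂ)) *ᵥ x0).re := by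
        rw [smul_eq_mul, Complex.mul_re]
        simp
      rw [hsm]
      have habs := abs_le.mp h1term
      nlinarith [hreB, hδpos.le, habs.1, habs.2]
    have hcontr : 0 < (star x0 ⬝ᵥ W *ᵥ x0).re + ε * (Real.exp (Cg * (τ0 - s)) * Cg) := by
      have h2 : ε * (Real.exp (Cg * (τ0 - s)) * Cg) = δ * Cg := by
        rw [hδdef]
        ring
      rw [h2]
      have h3 : δ * Cg = δ * ((d:ℝ) * Kb) + δ := by
        rw [hCg]
        ring
      linarith
    linarith
  -- conclude
  have hfinal : ∀ x : (Fin n × Fin N) → ℂ, (∑ i, ‖x i‖^2) = 1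
      → 0 ≤ (star x ⬝ᵥ (A t) *ᵥ x).re := by
    intro x hx
    by_contra hneg
    push_neg at hneg
    set r : ℝ := -(star x ⬝ᵥ (A t) *ᵥ x).re with hrdef
    have hrpos : 0 < r := by
      rw [hrdef]
      linarith
    set ε : ℝ := r / (2 * Real.exp (Cg * (t - s))) with hεdef
    have hεpos : 0 < ε := by positivity
    have hk := key ε hεpos t (Set.right_mem_Icc.mpr hst) x hx
    have heq : ε * Real.exp (Cg * (t - s)) = r / 2 := by
      rw [hεdef]
      field_simp
    rw [heq] at hk
    have : (star x ⬝ᵥ (A t) *ᵥ x).re = -r := by rw [hrdef]; ring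
    linarith
  exact psd_of_herm_re_nonneg (hherm t (Set.right_mem_Icc.mpr hst)) hfinal
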